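/- arXiv:2102.09611 — 2 statements merged into one kernel-verified Lean document; each statement's English description precedes it below -/
import Mathlib

section
/- Let σ : ℝ → ℝ be continuously differentiable and define g_μ(v) = σ(|v|)(e_μ × v) for μ = 1,2,3. Then each g_μ is differentiable at every v ≠ 0, and for every v ∈ ℝ³ with v ≠ 0 and each i ∈ {1,2,3}: (1/2) Σ_{μ=1}^3 Σ_{j=1}^3 (∂g^i_μ/∂v^j)(v) · g^j_μ(v) = −σ(|v|)² v^i. Hence with G ≡ 0 the drift coefficient K_i = G^i + (1/2)Σ_μ Σ_j (∂g^i_μ/∂v^j) g^j_μ associated with the Lorentz forcing terms equals K(v) = −σ(|v|)² v. -/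
open Matrix

/-- Euclidean norm on `ℝ³ = Fin 3 → ℝ`. -/
noncomputable def enorm3 (v : Fin 3 → ℝ) : ℝ := Real.sqrt (∑ k : Fin 3, v k ^ 2)

/-- Partial derivative of a scalar function on `ℝ³ = Fin 3 → ℝ` in the `j`-th
coordinate direction. -/
noncomputable def pd (f : (Fin 3 → ℝ) → ℝ) (j : Fin 3) (v : Fin 3 → ℝ) : ℝ :=
  fderiv ℝ f v (Pi.single j 1)

noncomputable def sqD (v : Fin 3 → ℝ) : (Fin 3 → ℝ) →L[ℝ] ℝ :=
  ∑ k : Fin 3, (2 * v k) • (ContinuousLinearMap.proj k : (Fin 3 → ℝ) →L[ℝ] ℝ)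

lemma hasFDerivAt_sq (v : Fin 3 → ℝ) :
    HasFDerivAt (fun w : Fin 3 → ℝ => ∑ k : Fin 3, w k ^ 2) (sqD v) v := by
  have h : ∀ k ∈ Finset.univ, HasFDerivAt (fun w : Fin 3 → ℝ => w k ^ 2)
      ((2 * v k) • (ContinuousLinearMap.proj k : (Fin 3 → ℝ) →L[ℝ] ℝ)) v := by
    intro k _
    have h1 : HasDerivAt (fun x : ℝ => x ^ 2) (2 * v k) (v k) := by
      simpa using hasDerivAt_pow 2 (v k)
    exact h1.comp_hasFDerivAt v
      (ContinuousLinearMap.proj k : (Fin 3 → ℝ) →L[ℝ] ℝ).hasFDerivAt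
  simpa [sqD] using HasFDerivAt.fun_sum h

lemma sum_sq_pos {v : Fin 3 → ℝ} (hv : v ≠ 0) : 0 < ∑ k : Fin 3, v k ^ 2 := by
  have : ∃ k, v k ≠ 0 := by
    by_contra h
    push_neg at h
    exact hv (funext h)
  obtain ⟨k, hk⟩ := this
  calc 0 < v k ^ 2 := by positivity
    _ = ∑ j ∈ {k}, v j ^ 2 := by simp
    _ ≤ ∑ j : Fin 3, v j ^ 2 := Finset.sum_le_sum_of_subset_of_nonneg
        (Finset.subset_univ _) (fun j _ _ => sq_nonneg _)

lemma hasFDerivAt_enorm3 {v : Fin 3 → ℝ} (hv : v ≠ 0) :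
    HasFDerivAt enorm3 ((1 / (2 * enorm3 v)) • sqD v) v := by
  have hn := sum_sq_pos hv
  have h1 := (Real.hasDerivAt_sqrt hn.ne').comp_hasFDerivAt v (hasFDerivAt_sq v)
  rw [show enorm3 = (fun x => √x) ∘ fun w : Fin 3 → ℝ => ∑ k, w k ^ 2 from rfl]
  simpa [enorm3] using h1

noncomputable def cLin (μ i : Fin 3) : (Fin 3 → ℝ) →L[ℝ] ℝ :=
  LinearMap.toContinuousLinearMap
    ((LinearMap.proj i).comp (crossProduct (Pi.single μ 1 : Fin 3 → ℝ)))

lemma cLin_apply (μ i : Fin 3) (w : Fin 3 → ℝ) :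
    cLin μ i w = ((Pi.single μ 1 : Fin 3 → ℝ) ⨯₃ w) i := rfl

lemma hasFDerivAt_comp (σ : ℝ → ℝ) (hσ : ContDiff ℝ 1 σ) (μ i : Fin 3)
    {v : Fin 3 → ℝ} (hv : v ≠ 0) :
    HasFDerivAt (fun w => σ (enorm3 w) * ((Pi.single μ 1 : Fin 3 → ℝ) ⨯₃ w) i)
      ((σ (enorm3 v)) • cLin μ i +
        (((Pi.single μ 1 : Fin 3 → ℝ) ⨯₃ v) i) •
          (deriv σ (enorm3 v) • ((1 / (2 * enorm3 v)) • sqD v))) v := by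
  have h1 : HasFDerivAt (fun w => σ (enorm3 w))
      (deriv σ (enorm3 v) • ((1 / (2 * enorm3 v)) • sqD v)) v :=
    ((hσ.differentiable one_ne_zero (enorm3 v)).hasDerivAt).comp_hasFDerivAt v
      (hasFDerivAt_enorm3 hv)
  have h2 : HasFDerivAt (fun w : Fin 3 → ℝ => ((Pi.single μ 1 : Fin 3 → ℝ) ⨯₃ w) i)
      (cLin μ i) v := (cLin μ i).hasFDerivAt
  simpa using h1.fun_mul h2

lemma sqD_single (v : Fin 3 → ℝ) (j : Fin 3) : sqD v (Pi.single j 1) = 2 * v j := by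
  simp [sqD, ContinuousLinearMap.sum_apply, Pi.single_apply, mul_ite,
    Finset.sum_ite_eq']

lemma pd_eq (σ : ℝ → ℝ) (hσ : ContDiff ℝ 1 σ) (μ i j : Fin 3)
    {v : Fin 3 → ℝ} (hv : v ≠ 0) :
    pd (fun w => σ (enorm3 w) * ((Pi.single μ 1 : Fin 3 → ℝ) ⨯₃ w) i) j v =
      σ (enorm3 v) * ((Pi.single μ 1 : Fin 3 → ℝ) ⨯₃ (Pi.single j 1 : Fin 3 → ℝ)) i +
        ((Pi.single μ 1 : Fin 3 → ℝ) ⨯₃ v) i *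
          (deriv σ (enorm3 v) * (v j / enorm3 v)) := by
  rw [pd, (hasFDerivAt_comp σ hσ μ i hv).fderiv]
  simp only [ContinuousLinearMap.add_apply, ContinuousLinearMap.smul_apply,
    cLin_apply, sqD_single, smul_eq_mul]
  ring

/-- **Drift coefficient of the Lorentz forcing terms.** For `σ : ℝ → ℝ` of class `C¹`
and `g_μ v = σ(|v|)(e_μ × v)`, each `g_μ` is differentiable at every `v ≠ 0`, and
`(1/2) Σ_μ Σ_j (∂g_μ^i/∂v^j)(v) g_μ^j(v) = −σ(|v|)² v^i`; hence with `G ≡ 0` the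
associated drift coefficient is `K(v) = −σ(|v|)² v`. -/
theorem lorentz_drift_coefficient
    (σ : ℝ → ℝ) (hσ : ContDiff ℝ 1 σ)
    (g : Fin 3 → (Fin 3 → ℝ) → (Fin 3 → ℝ))
    (hg : ∀ μ v, g μ v = σ (enorm3 v) • ((Pi.single μ 1 : Fin 3 → ℝ) ⨯₃ v)) :
    ∀ v : Fin 3 → ℝ, v ≠ 0 →
      (∀ μ : Fin 3, DifferentiableAt ℝ (g μ) v) ∧
      (∀ i : Fin 3,
        (1/2) * ∑ μ : Fin 3, ∑ j : Fin 3, pd (fun w => g μ w i) j v * g μ v j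
          = -(σ (enorm3 v)) ^ 2 * v i) ∧
      (∀ (G K : (Fin 3 → ℝ) → Fin 3 → ℝ), (∀ w, G w = 0) →
        (∀ w i, K w i =
          G w i + (1/2) * ∑ μ : Fin 3, ∑ j : Fin 3, pd (fun u => g μ u i) j w * g μ w j) →
        ∀ i : Fin 3, K v i = -(σ (enorm3 v)) ^ 2 * v i) := by
  intro v hv
  have hN : enorm3 v ≠ 0 := by
    have := sum_sq_pos hv
    simp only [enorm3]
    positivity
  have hgfun : ∀ μ i : Fin 3, (fun w => g μ w i) =
      fun w => σ (enorm3 w) * ((Pi.single μ 1 : Fin 3 → ℝ) ⨯₃ w) i := by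
    intro μ i; funext w; rw [hg]; rfl
  have hmain : ∀ i : Fin 3,
      (1/2) * ∑ μ : Fin 3, ∑ j : Fin 3, pd (fun w => g μ w i) j v * g μ v j
        = -(σ (enorm3 v)) ^ 2 * v i := by
    intro i
    have hpd : ∀ μ j : Fin 3, pd (fun w => g μ w i) j v =
        σ (enorm3 v) * ((Pi.single μ 1 : Fin 3 → ℝ) ⨯₃ (Pi.single j 1 : Fin 3 → ℝ)) i +
          ((Pi.single μ 1 : Fin 3 → ℝ) ⨯₃ v) i *
            (deriv σ (enorm3 v) * (v j / enorm3 v)) := by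
      intro μ j; rw [hgfun]; exact pd_eq σ hσ μ i j hv
    simp only [hpd]
    simp only [hg, Pi.smul_apply, smul_eq_mul]
    fin_cases i <;>
      simp [Fin.sum_univ_three, cross_apply, Pi.single_apply] <;>
      field_simp <;> ring
  refine ⟨?_, hmain, ?_⟩
  · intro μ
    have : g μ = fun w => σ (enorm3 w) •
        ((crossProduct (Pi.single μ 1 : Fin 3 → ℝ)) w) := funext (hg μ)
    rw [this]
    exact ((hσ.differentiable one_ne_zero _).comp v
        (hasFDerivAt_enorm3 hv).differentiableAt).smul
      (LinearMap.toContinuousLinearMap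
        (crossProduct (Pi.single μ 1 : Fin 3 → ℝ))).differentiableAt
  · intro G K hG hK i
    rw [hK, hG, hmain i]
    simp
end

section
/- Let ν : ℝ → ℝ be of class C² and f : ℝ³ → ℝ be of class C². Then for every v ∈ ℝ³ with v ≠ 0: (1/2) Σ_{i,j=1}^3 ∂²/∂v^i∂v^j[ ν(|v|)(|v|² δ_ij − v^i v^j) f(v) ] + Σ_{i=1}^3 ∂/∂v^i[ ν(|v|) v^i f(v) ] = (ν(|v|)/2) Σ_{i=1}^3 ∂/∂v^i[ Σ_{j=1}^3 (|v|² δ_ij − v^i v^j) (∂f/∂v^j)(v) ]. In other words, the Fokker–Planck operator with diffusion matrix D_ij(v) = ν(|v|)(|v|²δ_ij − v^i v^j) and drift K_i(v) = −ν(|v|) v^i equals the Lorentz collision operator C[f](v) = (ν(|v|)/2) ∇_v·((|v|²I − v⊗v)∇_v f) away from v = 0. -/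
open Filter

noncomputable def Q3 (w : Fin 3 → ℝ) : ℝ := ∑ k : Fin 3, w k ^ 2

lemma Q3_nonneg (w : Fin 3 → ℝ) : 0 ≤ Q3 w :=
  Finset.sum_nonneg fun k _ => sq_nonneg _

lemma enorm3_sq (w : Fin 3 → ℝ) : enorm3 w ^ 2 = Q3 w :=
  Real.sq_sqrt (Q3_nonneg w)

lemma Q3_pos {w : Fin 3 → ℝ} (hw : w ≠ 0) : 0 < Q3 w := by
  obtain ⟨k, hk⟩ := Function.ne_iff.mp hw
  have h1 : w k ^ 2 ≤ Q3 w :=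
    Finset.single_le_sum (fun k _ => sq_nonneg (w k)) (Finset.mem_univ k)
  have := pow_pos (abs_pos.mpr hk) 2
  nlinarith [sq_abs (w k)]

lemma enorm3_pos {w : Fin 3 → ℝ} (hw : w ≠ 0) : 0 < enorm3 w :=
  Real.sqrt_pos.mpr (Q3_pos hw)

lemma hasFDerivAt_Q3 (w : Fin 3 → ℝ) :
    HasFDerivAt Q3 (∑ k : Fin 3, (2 * w k) • (ContinuousLinearMap.proj k : (Fin 3 → ℝ) →L[ℝ] ℝ)) w := by
  have : ∀ k : Fin 3, HasFDerivAt (fun w : Fin 3 → ℝ => w k ^ 2)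
      ((2 * w k) • (ContinuousLinearMap.proj k : (Fin 3 → ℝ) →L[ℝ] ℝ)) w := by
    intro k
    have h : HasFDerivAt (fun w : Fin 3 → ℝ => w k)
        (ContinuousLinearMap.proj k : (Fin 3 → ℝ) →L[ℝ] ℝ) w :=
      (ContinuousLinearMap.proj k : (Fin 3 → ℝ) →L[ℝ] ℝ).hasFDerivAt
    have hm := h.fun_mul h
    rw [two_mul, add_smul]
    simpa [pow_two, smul_smul] using hm
  exact HasFDerivAt.fun_sum (fun k _ => this k)

lemma hasFDerivAt_enorm3_s4 {w : Fin 3 → ℝ} (hw : w ≠ 0) :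
    HasFDerivAt enorm3 ((1 / (2 * enorm3 w)) •
      (∑ k : Fin 3, (2 * w k) • (ContinuousLinearMap.proj k : (Fin 3 → ℝ) →L[ℝ] ℝ))) w := by
  have h1 : HasDerivAt Real.sqrt (1 / (2 * Real.sqrt (Q3 w))) (Q3 w) :=
    Real.hasDerivAt_sqrt (ne_of_gt (Q3_pos hw))
  have := h1.comp_hasFDerivAt w (hasFDerivAt_Q3 w)
  exact this

lemma differentiableAt_enorm3 {w : Fin 3 → ℝ} (hw : w ≠ 0) :
    DifferentiableAt ℝ enorm3 w := (hasFDerivAt_enorm3_s4 hw).differentiableAt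

lemma pd_enorm3 {w : Fin 3 → ℝ} (hw : w ≠ 0) (j : Fin 3) :
    pd enorm3 j w = w j / enorm3 w := by
  have h := (hasFDerivAt_enorm3_s4 hw).fderiv
  unfold pd
  rw [h]
  have hr := (enorm3_pos hw).ne'
  simp [ContinuousLinearMap.sum_apply, Pi.single_apply, Finset.mul_sum]
  field_simp

lemma pd_congr {g h : (Fin 3 → ℝ) → ℝ} {v : Fin 3 → ℝ} (hgh : g =ᶠ[nhds v] h) (j : Fin 3) :
    pd g j v = pd h j v := by unfold pd; rw [hgh.fderiv_eq]

lemma pd_add {g h : (Fin 3 → ℝ) → ℝ} {v : Fin 3 → ℝ} (hg : DifferentiableAt ℝ g v)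
    (hh : DifferentiableAt ℝ h v) (j : Fin 3) :
    pd (fun w => g w + h w) j v = pd g j v + pd h j v := by
  unfold pd; rw [fderiv_fun_add hg hh]; simp

lemma pd_sub {g h : (Fin 3 → ℝ) → ℝ} {v : Fin 3 → ℝ} (hg : DifferentiableAt ℝ g v)
    (hh : DifferentiableAt ℝ h v) (j : Fin 3) :
    pd (fun w => g w - h w) j v = pd g j v - pd h j v := by
  unfold pd; rw [fderiv_fun_sub hg hh]; simp

lemma pd_mul {g h : (Fin 3 → ℝ) → ℝ} {v : Fin 3 → ℝ} (hg : DifferentiableAt ℝ g v)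
    (hh : DifferentiableAt ℝ h v) (j : Fin 3) :
    pd (fun w => g w * h w) j v = g v * pd h j v + h v * pd g j v := by
  unfold pd; rw [fderiv_fun_mul hg hh]; simp

lemma pd_const_mul {g : (Fin 3 → ℝ) → ℝ} {v : Fin 3 → ℝ} (hg : DifferentiableAt ℝ g v)
    (c : ℝ) (j : Fin 3) :
    pd (fun w => c * g w) j v = c * pd g j v := by
  unfold pd; rw [fderiv_const_mul hg c]; simp

lemma pd_sum {g : Fin 3 → (Fin 3 → ℝ) → ℝ} {v : Fin 3 → ℝ}
    (hg : ∀ j, DifferentiableAt ℝ (g j) v) (k : Fin 3) :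
    pd (fun w => ∑ j : Fin 3, g j w) k v = ∑ j : Fin 3, pd (g j) k v := by
  unfold pd; rw [fderiv_fun_sum (fun j _ => hg j)]; simp

lemma hasFDerivAt_coord (k : Fin 3) (w : Fin 3 → ℝ) :
    HasFDerivAt (fun w : Fin 3 → ℝ => w k)
      (ContinuousLinearMap.proj k : (Fin 3 → ℝ) →L[ℝ] ℝ) w :=
  (ContinuousLinearMap.proj k : (Fin 3 → ℝ) →L[ℝ] ℝ).hasFDerivAt

lemma pd_coord (k j : Fin 3) (v : Fin 3 → ℝ) :
    pd (fun w => w k) j v = if k = j then 1 else 0 := by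
  unfold pd
  rw [(hasFDerivAt_coord k v).fderiv]
  simp [Pi.single_apply]

lemma differentiable_Q3 : Differentiable ℝ Q3 := fun w => (hasFDerivAt_Q3 w).differentiableAt

lemma pd_Q3 (j : Fin 3) (v : Fin 3 → ℝ) : pd Q3 j v = 2 * v j := by
  unfold pd
  rw [(hasFDerivAt_Q3 v).fderiv]
  simp [ContinuousLinearMap.sum_apply, Pi.single_apply]

lemma hasFDerivAt_N {ν : ℝ → ℝ} (hν : ContDiff ℝ 2 ν) {w : Fin 3 → ℝ} (hw : w ≠ 0) : HasFDerivAt (fun w => ν (enorm3 w))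
    (deriv ν (enorm3 w) • ((1 / (2 * enorm3 w)) •
      (∑ k : Fin 3, (2 * w k) • (ContinuousLinearMap.proj k : (Fin 3 → ℝ) →L[ℝ] ℝ)))) w := by
  have h1 : HasDerivAt ν (deriv ν (enorm3 w)) (enorm3 w) :=
    ((hν.differentiable two_ne_zero) (enorm3 w)).hasDerivAt
  exact h1.comp_hasFDerivAt w (hasFDerivAt_enorm3_s4 hw)

lemma differentiableAt_N {ν : ℝ → ℝ} (hν : ContDiff ℝ 2 ν) {w : Fin 3 → ℝ} (hw : w ≠ 0) : DifferentiableAt ℝ (fun w => ν (enorm3 w)) w :=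
  (hasFDerivAt_N hν hw).differentiableAt

lemma pd_N {ν : ℝ → ℝ} (hν : ContDiff ℝ 2 ν) {w : Fin 3 → ℝ} (hw : w ≠ 0) (j : Fin 3) : pd (fun w => ν (enorm3 w)) j w = deriv ν (enorm3 w) * (w j / enorm3 w) := by
  have h2 : pd enorm3 j w = w j / enorm3 w := pd_enorm3 hw j
  unfold pd at h2 ⊢
  rw [(hasFDerivAt_N hν hw).fderiv]
  rw [(hasFDerivAt_enorm3_s4 hw).fderiv] at h2
  simp only [ContinuousLinearMap.coe_smul', Pi.smul_apply, smul_eq_mul] at h2 ⊢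
  rw [h2]

lemma contDiff_pd {f : (Fin 3 → ℝ) → ℝ} (hf : ContDiff ℝ 2 f) (j : Fin 3) :
    ContDiff ℝ 1 (pd f j) := by
  have h2 : ContDiff ℝ (1 + 1) f := by exact_mod_cast hf
  have h1 : ContDiff ℝ 1 (fderiv ℝ f) := (contDiff_succ_iff_fderiv.mp h2).2.2
  exact (ContinuousLinearMap.apply ℝ ℝ (Pi.single j 1)).contDiff.comp h1

lemma pd_mul_const {g : (Fin 3 → ℝ) → ℝ} {v : Fin 3 → ℝ} (hg : DifferentiableAt ℝ g v)
    (c : ℝ) (j : Fin 3) :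
    pd (fun w => g w * c) j v = c * pd g j v := by
  unfold pd; rw [fderiv_mul_const hg c]; simp

noncomputable def phiFP (ν : ℝ → ℝ) (f : (Fin 3 → ℝ) → ℝ) (i j : Fin 3) (w : Fin 3 → ℝ) : ℝ :=
  (ν (enorm3 w) * (Q3 w * (if i = j then 1 else 0) - w i * w j)) * pd f j w
    + f w * (ν (enorm3 w) *
        ((if i = j then 1 else 0) * (2 * w j) - ((if i = j then 1 else 0) * w j + w i))
      + (Q3 w * (if i = j then 1 else 0) - w i * w j)
          * (deriv ν (enorm3 w) * (w j / enorm3 w)))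

lemma inner_deriv {ν : ℝ → ℝ} (hν : ContDiff ℝ 2 ν) {f : (Fin 3 → ℝ) → ℝ}
    (hf : ContDiff ℝ 2 f) (i j : Fin 3) {w : Fin 3 → ℝ} (hw : w ≠ 0) :
    pd (fun w => ν (enorm3 w) * (Q3 w * (if i = j then 1 else 0) - w i * w j) * f w) j w
    = phiFP ν f i j w := by
  unfold phiFP
  have dN : DifferentiableAt ℝ (fun w => ν (enorm3 w)) w := differentiableAt_N hν hw
  have dci : DifferentiableAt ℝ (fun w : Fin 3 → ℝ => w i) w :=
    (hasFDerivAt_coord i w).differentiableAt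
  have dcj : DifferentiableAt ℝ (fun w : Fin 3 → ℝ => w j) w :=
    (hasFDerivAt_coord j w).differentiableAt
  have dA : DifferentiableAt ℝ
      (fun w => Q3 w * (if i = j then 1 else 0) - w i * w j) w :=
    ((differentiable_Q3 w).mul_const _).sub (dci.mul dcj)
  have df : DifferentiableAt ℝ f w := (hf.differentiable two_ne_zero) w
  rw [pd_mul (dN.fun_mul dA) df j, pd_mul dN dA j, pd_sub ((differentiable_Q3 w).mul_const _) (dci.fun_mul dcj) j,
    pd_mul_const (differentiable_Q3 w) _ j, pd_mul dci dcj j, pd_Q3, pd_coord, pd_coord,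
    pd_N hν hw j]
  simp only [if_pos rfl]
  ring_nf
  norm_num

lemma phiFP_diffAt {ν : ℝ → ℝ} (hν : ContDiff ℝ 2 ν) {f : (Fin 3 → ℝ) → ℝ}
    (hf : ContDiff ℝ 2 f) (i j : Fin 3) {v : Fin 3 → ℝ} (hv : v ≠ 0) :
    DifferentiableAt ℝ (phiFP ν f i j) v := by
  have dN : DifferentiableAt ℝ (fun w => ν (enorm3 w)) v := differentiableAt_N hν hv
  have dci : DifferentiableAt ℝ (fun w : Fin 3 → ℝ => w i) v :=
    (hasFDerivAt_coord i v).differentiableAt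
  have dcj : DifferentiableAt ℝ (fun w : Fin 3 → ℝ => w j) v :=
    (hasFDerivAt_coord j v).differentiableAt
  have dA : DifferentiableAt ℝ
      (fun w => Q3 w * (if i = j then 1 else 0) - w i * w j) v :=
    ((differentiable_Q3 v).mul_const _).sub (dci.mul dcj)
  have df : DifferentiableAt ℝ f v := (hf.differentiable two_ne_zero) v
  have dpdf : DifferentiableAt ℝ (pd f j) v :=
    ((contDiff_pd hf j).differentiable one_ne_zero) v
  have h2 : ContDiff ℝ (1 + 1) ν := by exact_mod_cast hν
  have hdν : Differentiable ℝ (deriv ν) :=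
    (contDiff_succ_iff_deriv.mp h2).2.2.differentiable one_ne_zero
  have denorm : DifferentiableAt ℝ enorm3 v := differentiableAt_enorm3 hv
  have ddν : DifferentiableAt ℝ (fun w => deriv ν (enorm3 w)) v :=
    (hdν (enorm3 v)).comp v denorm
  have hinv : DifferentiableAt ℝ (fun w => (enorm3 w)⁻¹) v :=
    denorm.inv (enorm3_pos hv).ne'
  have hdiv : DifferentiableAt ℝ (fun w => w j / enorm3 w) v := by
    simpa [div_eq_mul_inv] using dcj.fun_mul hinv
  exact ((dN.mul dA).mul dpdf).add
    (df.mul ((dN.mul ((differentiableAt_const _).mul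
      ((differentiableAt_const _).mul dcj) |>.sub
      (((differentiableAt_const _).mul dcj).add dci))).add
      (dA.mul (ddν.mul hdiv))))

lemma fin3_mk_two : (⟨2, by norm_num⟩ : Fin 3) = 2 := rfl

lemma phiFP_sum {ν : ℝ → ℝ} (f : (Fin 3 → ℝ) → ℝ) (i : Fin 3) :
    (fun w => ∑ j : Fin 3, phiFP ν f i j w)
    = fun w => (-2) * (ν (enorm3 w) * w i * f w)
        + ν (enorm3 w) * ∑ j : Fin 3,
            (Q3 w * (if i = j then 1 else 0) - w i * w j) * pd f j w := by
  funext w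
  fin_cases i <;>
    · simp only [phiFP, Q3, Fin.sum_univ_three, Fin.isValue]
      norm_num [Fin.ext_iff, fin3_mk_two]
      ring

/-- **Fokker–Planck form of the Lorentz collision operator.** For `ν : ℝ → ℝ` of class
`C²` and `f : ℝ³ → ℝ` of class `C²`, at every `v ≠ 0`,
`(1/2) Σ_{i,j} ∂²/∂v^i∂v^j[ν(|v|)(|v|²δ_ij − v^i v^j) f] + Σ_i ∂/∂v^i[ν(|v|) v^i f]
  = (ν(|v|)/2) Σ_i ∂/∂v^i[Σ_j (|v|²δ_ij − v^i v^j) ∂f/∂v^j]`,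
i.e. the Fokker–Planck operator with diffusion `D_ij(v) = ν(|v|)(|v|²δ_ij − v^i v^j)`
and drift `K_i(v) = −ν(|v|) v^i` equals the Lorentz operator away from `v = 0`. -/
theorem lorentz_fokker_planck_form
    (ν : ℝ → ℝ) (hν : ContDiff ℝ 2 ν)
    (f : (Fin 3 → ℝ) → ℝ) (hf : ContDiff ℝ 2 f)
    (v : Fin 3 → ℝ) (hv : v ≠ 0) :
    (1/2) * (∑ i : Fin 3, ∑ j : Fin 3,
        pd (pd (fun w => ν (enorm3 w)
          * ((enorm3 w) ^ 2 * (if i = j then 1 else 0) - w i * w j) * f w) j) i v)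
      + ∑ i : Fin 3, pd (fun w => ν (enorm3 w) * w i * f w) i v
    = ν (enorm3 v) / 2 * ∑ i : Fin 3,
        pd (fun w => ∑ j : Fin 3,
          ((enorm3 w) ^ 2 * (if i = j then 1 else 0) - w i * w j) * pd f j w) i v := by
  simp only [enorm3_sq]
  have hnhds : ∀ᶠ w in nhds v, w ≠ 0 := eventually_ne_nhds hv
  have dN := differentiableAt_N hν hv
  have df : DifferentiableAt ℝ f v := (hf.differentiable two_ne_zero) v
  have dG : ∀ i : Fin 3, DifferentiableAt ℝ
      (fun w => ∑ j : Fin 3, (Q3 w * (if i = j then 1 else 0) - w i * w j) * pd f j w) v := by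
    intro i
    refine DifferentiableAt.fun_sum (fun j _ => ?_)
    exact (((differentiable_Q3 v).mul_const _).sub
      (((hasFDerivAt_coord i v).differentiableAt).mul
        ((hasFDerivAt_coord j v).differentiableAt))).mul
      (((contDiff_pd hf j).differentiable one_ne_zero) v)
  have dT : ∀ i : Fin 3, DifferentiableAt ℝ (fun w => ν (enorm3 w) * w i * f w) v :=
    fun i => (dN.mul ((hasFDerivAt_coord i v).differentiableAt)).mul df
  have hL : ∀ i : Fin 3,
      (∑ j : Fin 3, pd (pd (fun w => ν (enorm3 w)
          * (Q3 w * (if i = j then 1 else 0) - w i * w j) * f w) j) i v)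
      = (-2) * pd (fun w => ν (enorm3 w) * w i * f w) i v
        + (ν (enorm3 v) * pd (fun w => ∑ j : Fin 3,
              (Q3 w * (if i = j then 1 else 0) - w i * w j) * pd f j w) i v
          + (∑ j : Fin 3, (Q3 v * (if i = j then 1 else 0) - v i * v j) * pd f j v)
              * (deriv ν (enorm3 v) * (v i / enorm3 v))) := by
    intro i
    have e1 : ∀ j : Fin 3, pd (pd (fun w => ν (enorm3 w)
        * (Q3 w * (if i = j then 1 else 0) - w i * w j) * f w) j) i v
        = pd (phiFP ν f i j) i v := by
      intro j
      refine pd_congr ?_ i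
      exact hnhds.mono (fun w hw => inner_deriv hν hf i j hw)
    simp only [e1]
    rw [← pd_sum (fun j => phiFP_diffAt hν hf i j hv) i]
    rw [phiFP_sum f i]
    rw [pd_add ((dT i).const_mul (-2)) (dN.fun_mul (dG i)) i]
    rw [pd_const_mul (dT i) (-2) i, pd_mul dN (dG i) i, pd_N hν hv i]
  simp only [hL]
  simp only [Fin.sum_univ_three, Q3]
  norm_num [Fin.ext_iff]
  ring
end
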